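/- Let (B, L, θ) be a Boolean dynamical system and M the set of all maximal tails of B. For A ∈ B let U_A = {T ∈ M : A ∈ T}. Then {U_A : A ∈ B} is a basis of compact open sets for a topology on M, and for any subset S ⊆ M the closure of S in this topology equals {T ∈ M : T ⊆ ∪_{S'∈S} S'}. -/

import Mathlib

/-- An ideal of a (generalized) Boolean algebra: a non-empty subset closed under
union and under intersection with arbitrary elements. -/
def IsBoolIdeal {B : Type*} [GeneralizedBooleanAlgebra B] (I : Set B) : Prop :=
  I.Nonempty ∧ (∀ a ∈ I, ∀ b ∈ I, a ⊔ b ∈ I) ∧ (∀ a ∈ I, ∀ b : B, a ⊓ b ∈ I)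

/-- A filter in a (generalized) Boolean algebra. -/
def IsBoolFilter {B : Type*} [GeneralizedBooleanAlgebra B] (ξ : Set B) : Prop :=
  ξ.Nonempty ∧ ⊥ ∉ ξ ∧ (∀ a ∈ ξ, ∀ b : B, a ≤ b → b ∈ ξ) ∧ (∀ a ∈ ξ, ∀ b ∈ ξ, a ⊓ b ∈ ξ)

/-- An ultrafilter of a (generalized) Boolean algebra. -/
def IsBoolUltrafilter {B : Type*} [GeneralizedBooleanAlgebra B] (ξ : Set B) : Prop :=
  IsBoolFilter ξ ∧ ∀ a ∈ ξ, ∀ b b' : B, a = b ⊔ b' → b ∈ ξ ∨ b' ∈ ξ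

/-- The relation `A ~ B ⟺ A ∪ A' = B ∪ B'` for some `A', B' ∈ I`. -/
def relI {B : Type*} [GeneralizedBooleanAlgebra B] (I : Set B) (a b : B) : Prop :=
  ∃ a' ∈ I, ∃ b' ∈ I, a ⊔ a' = b ⊔ b'

/-- The action of a finite word `α ∈ L*`: `θ_α = θ_{α_n} ∘ ⋯ ∘ θ_{α_1}`. -/
def wordAct {B L : Type*} (θ : L → B → B) (α : List L) (A : B) : B :=
  α.foldl (fun x a => θ a x) A

/-- `α^k`: the word `α` concatenated with itself `k` times. -/
def wordPow {L : Type*} (α : List L) (k : ℕ) : List L := (List.replicate k α).flatten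

/-- A Boolean dynamical system: a Boolean algebra `B`, a set `L`, and actions
`θ_a` on `B` (Boolean homomorphisms with `θ_a ⊥ = ⊥`) such that each word
action has compact range and closed domain. -/
structure BoolDynSys (B L : Type*) [GeneralizedBooleanAlgebra B] where
  θ : L → B → B
  map_inf : ∀ (a : L) (A A' : B), θ a (A ⊓ A') = θ a A ⊓ θ a A'
  map_sup : ∀ (a : L) (A A' : B), θ a (A ⊔ A') = θ a A ⊔ θ a A'
  map_sdiff : ∀ (a : L) (A A' : B), θ a (A \ A') = θ a A \ θ a A'
  map_bot : ∀ a : L, θ a ⊥ = ⊥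
  compactRange : ∀ α : List L, α ≠ [] → ∃ R : B, IsLUB (Set.range (wordAct θ α)) R
  closedDomain : ∀ α : List L, α ≠ [] → ∀ R : B, IsLUB (Set.range (wordAct θ α)) R →
      ∃ D : B, wordAct θ α D = R

section BDS
variable {B L : Type*} [GeneralizedBooleanAlgebra B]

/-- `Δ_A = {a ∈ L : θ_a(A) ≠ ∅}`. -/
def DeltaSet (S : BoolDynSys B L) (A : B) : Set L := {a : L | S.θ a A ≠ ⊥}

/-- `A` is regular if every non-empty `C ⊆ A` has `0 < |Δ_C| < ∞`. -/
def RegularElt (S : BoolDynSys B L) (A : B) : Prop :=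
  ∀ C : B, C ≤ A → C ≠ ⊥ → (DeltaSet S C).Finite ∧ (DeltaSet S C).Nonempty

/-- An ultrafilter cycle `(α, η)`: `θ_α(A) ∈ η` for all `A ∈ η`. -/
def IsUFCycle (S : BoolDynSys B L) (α : List L) (η : Set B) : Prop :=
  α ≠ [] ∧ IsBoolUltrafilter η ∧ ∀ A ∈ η, wordAct S.θ α A ∈ η

/-- A cycle `(α, A)`: `θ_α(C) = C` for all `C ⊆ A`. -/
def IsCycle (S : BoolDynSys B L) (α : List L) (A : B) : Prop :=
  α ≠ [] ∧ A ≠ ⊥ ∧ ∀ C : B, C ≤ A → wordAct S.θ α C = C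

/-- The cycle `(α, A)` has no exits: for all `t ≤ |α|` and all non-empty
`C ⊆ θ_{α₁⋯α_t}(A)`, `C` is regular with `Δ_C = {α_{t+1}}` (indices mod `|α|`). -/
def NoExits (S : BoolDynSys B L) (α : List L) (A : B) : Prop :=
  ∀ t : ℕ, ∀ _h1 : 1 ≤ t, ∀ h2 : t ≤ α.length, ∀ C : B, C ≠ ⊥ →
    C ≤ wordAct S.θ (α.take t) A →
    RegularElt S C ∧
      DeltaSet S C = {α.get ⟨t % α.length, Nat.mod_lt t (Nat.lt_of_lt_of_le _h1 h2)⟩}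

/-- The cycle `(α, A)` has an exit. -/
def HasExit (S : BoolDynSys B L) (α : List L) (A : B) : Prop :=
  ∃ t : ℕ, ∃ _h1 : 1 ≤ t, ∃ h2 : t ≤ α.length, ∃ C : B, C ≠ ⊥ ∧
    C ≤ wordAct S.θ (α.take t) A ∧
    DeltaSet S C ≠ {α.get ⟨t % α.length, Nat.mod_lt t (Nat.lt_of_lt_of_le _h1 h2)⟩}

/-- Condition (L): every cycle has an exit. -/
def ConditionL (S : BoolDynSys B L) : Prop :=
  ∀ (α : List L) (A : B), IsCycle S α A → HasExit S α A

/-- A hereditary subset: closed under the actions. -/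
def IsHereditary (S : BoolDynSys B L) (H : Set B) : Prop :=
  ∀ A ∈ H, ∀ a : L, S.θ a A ∈ H

/-- A saturated subset: `A ∈ H` whenever `A` is regular and `θ_a(A) ∈ H` for all `a`. -/
def IsSaturated (S : BoolDynSys B L) (H : Set B) : Prop :=
  ∀ A : B, RegularElt S A → (∀ a : L, S.θ a A ∈ H) → A ∈ H

/-- A maximal tail: conditions (T0)–(T5). -/
def IsMaximalTail (S : BoolDynSys B L) (T : Set B) : Prop :=
  T.Nonempty ∧
  (⊥ ∉ T) ∧
  (∀ A : B, ∀ a : L, S.θ a A ∈ T → A ∈ T) ∧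
  (∀ A C : B, A ⊔ C ∈ T → A ∈ T ∨ C ∈ T) ∧
  (∀ A ∈ T, ∀ C : B, A ≤ C → C ∈ T) ∧
  (∀ A ∈ T, RegularElt S A → ∃ a : L, S.θ a A ∈ T) ∧
  (∀ A₁ ∈ T, ∀ A₂ ∈ T, ∃ C ∈ T,
      (∃ α : List L, C ≤ wordAct S.θ α A₁) ∧ (∃ β : List L, C ≤ wordAct S.θ β A₂))

/-- A cyclic maximal tail. -/
def IsCyclicMaximalTail (S : BoolDynSys B L) (T : Set B) : Prop :=
  IsMaximalTail S T ∧
  ∃ (α : List L) (η : Set B) (A : B), IsUFCycle S α η ∧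
    T = {C : B | ∃ β : List L, wordAct S.θ β C ∈ η} ∧ A ∈ η ∧
    ∀ β : List L, β ≠ [] → ∀ C : B, C ≤ A → wordAct S.θ β C ∈ η →
      C ∈ η ∧ ∃ k : ℕ, 0 < k ∧ β = wordPow α k

/-- Condition (K). -/
def ConditionK (S : BoolDynSys B L) : Prop :=
  ¬ ∃ (α : List L) (η : Set B) (A : B), IsUFCycle S α η ∧ A ∈ η ∧
    ∀ β : List L, β ≠ [] → ∀ C : B, C ≤ A → wordAct S.θ β C ∈ η →
      C ∈ η ∧ ∃ k : ℕ, 0 < k ∧ β = wordPow α k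

/-! Notions for the quotient Boolean dynamical system `(B/H, L, θ)` (for a
hereditary saturated ideal `H`), expressed in terms of representatives in `B`. -/

/-- `[C] ⊆ [B']` in `B/H`. -/
def qle (H : Set B) (C A : B) : Prop := ∃ W ∈ H, C ≤ A ⊔ W

/-- `Δ_{[C]}` in `B/H`. -/
def QDelta (S : BoolDynSys B L) (H : Set B) (C : B) : Set L := {a : L | S.θ a C ∉ H}

/-- `[A]` is regular in `B/H`. -/
def QRegular (S : BoolDynSys B L) (H : Set B) (A : B) : Prop :=
  ∀ C : B, C ∉ H → qle H C A → (QDelta S H C).Finite ∧ (QDelta S H C).Nonempty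

/-- `(α, [A])` is a cycle in the quotient `(B/H, L, θ)`. -/
def QCycle (S : BoolDynSys B L) (H : Set B) (α : List L) (A : B) : Prop :=
  α ≠ [] ∧ A ∉ H ∧ ∀ C : B, qle H C A → relI H (wordAct S.θ α C) C

/-- The cycle `(α, [A])` has an exit in the quotient `(B/H, L, θ)`. -/
def QHasExit (S : BoolDynSys B L) (H : Set B) (α : List L) (A : B) : Prop :=
  ∃ t : ℕ, ∃ _h1 : 1 ≤ t, ∃ h2 : t ≤ α.length, ∃ C : B, C ∉ H ∧
    qle H C (wordAct S.θ (α.take t) A) ∧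
    QDelta S H C ≠ {α.get ⟨t % α.length, Nat.mod_lt t (Nat.lt_of_lt_of_le _h1 h2)⟩}

/-- The quotient `(B/H, L, θ)` satisfies Condition (L). -/
def QConditionL (S : BoolDynSys B L) (H : Set B) : Prop :=
  ∀ (α : List L) (A : B), QCycle S H α A → QHasExit S H α A

end BDS

/-- The set of all maximal tails of `(B, L, θ)`. -/
def TailSpace {B L : Type*} [GeneralizedBooleanAlgebra B] (S : BoolDynSys B L) :
    Type _ := {T : Set B // IsMaximalTail S T}

/-- `U_A = {T ∈ M : A ∈ T}`. -/
def USet {B L : Type*} [GeneralizedBooleanAlgebra B] (S : BoolDynSys B L) (A : B) :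
    Set (TailSpace S) := {T : TailSpace S | A ∈ T.1}

/-- The topology on the set of maximal tails generated by `{U_A : A ∈ B}`. -/
instance {B L : Type*} [GeneralizedBooleanAlgebra B] (S : BoolDynSys B L) :
    TopologicalSpace (TailSpace S) :=
  TopologicalSpace.generateFrom {s : Set (TailSpace S) | ∃ A : B, s = USet S A}


namespace TailSpaceProof

open TopologicalSpace

variable {B L : Type*} [GeneralizedBooleanAlgebra B] (S : BoolDynSys B L)

lemma theta_mono (a : L) {A C : B} (h : A ≤ C) : S.θ a A ≤ S.θ a C := by
  have h1 : A ⊔ C = C := sup_eq_right.mpr h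
  have h2 := S.map_sup a A C
  rw [h1] at h2
  exact h2 ▸ le_sup_left

lemma wordAct_cons (a : L) (α : List L) (A : B) :
    wordAct S.θ (a :: α) A = wordAct S.θ α (S.θ a A) := rfl

lemma wordAct_append (α β : List L) (A : B) :
    wordAct S.θ (α ++ β) A = wordAct S.θ β (wordAct S.θ α A) :=
  List.foldl_append

lemma wordAct_mono (α : List L) {A C : B} (h : A ≤ C) :
    wordAct S.θ α A ≤ wordAct S.θ α C := by
  induction α generalizing A C with
  | nil => exact h
  | cons a α ih => exact ih (theta_mono S a h)

lemma wordAct_sup (α : List L) (A C : B) :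
    wordAct S.θ α (A ⊔ C) = wordAct S.θ α A ⊔ wordAct S.θ α C := by
  induction α generalizing A C with
  | nil => rfl
  | cons a α ih => rw [wordAct_cons, S.map_sup, ih]; rfl

/-- Conditions (T0)-(T4), without nonemptiness and (T5). -/
def PreTail (T : Set B) : Prop :=
  (⊥ ∉ T) ∧
  (∀ A : B, ∀ a : L, S.θ a A ∈ T → A ∈ T) ∧
  (∀ A C : B, A ⊔ C ∈ T → A ∈ T ∨ C ∈ T) ∧
  (∀ A ∈ T, ∀ C : B, A ≤ C → C ∈ T) ∧
  (∀ A ∈ T, RegularElt S A → ∃ a : L, S.θ a A ∈ T)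

lemma word_mem {T : Set B} (hT : ∀ A : B, ∀ a : L, S.θ a A ∈ T → A ∈ T)
    (α : List L) {A : B} (h : wordAct S.θ α A ∈ T) : A ∈ T := by
  induction α generalizing A with
  | nil => exact h
  | cons a α ih => exact hT A a (ih h)

/-- Elements of `T` whose future meets the future of `C` inside `T`. -/
def TCset (T : Set B) (C : B) : Set B :=
  {C' : B | C' ∈ T ∧ ∃ D ∈ T, ∃ α β : List L,
    D ≤ wordAct S.θ α C ∧ D ≤ wordAct S.θ β C'}

lemma TCset_subset (T : Set B) (C : B) : TCset S T C ⊆ T := fun _ h => h.1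

lemma TCset_self {T : Set B} {C : B} (hC : C ∈ T) : C ∈ TCset S T C :=
  ⟨hC, C, hC, [], [], le_rfl, le_rfl⟩

lemma TCset_symm {T : Set B} {C C' : B} (h : C' ∈ TCset S T C) (hC : C ∈ T) :
    C ∈ TCset S T C' := by
  obtain ⟨h1, D, hD, α, β, hα, hβ⟩ := h
  exact ⟨hC, D, hD, β, α, hβ, hα⟩

lemma TCset_preTail {T : Set B} (hT : PreTail S T) {C : B} (hC : C ∈ T) :
    PreTail S (TCset S T C) := by
  obtain ⟨h0, h1, h2, h3, h4⟩ := hT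
  refine ⟨fun h => h0 h.1, ?_, ?_, ?_, ?_⟩
  · rintro A a ⟨hmem, D, hD, α, β, hα, hβ⟩
    exact ⟨h1 A a hmem, D, hD, α, a :: β, hα, hβ⟩
  · rintro A C₂ ⟨hmem, D, hD, α, β, hα, hβ⟩
    rw [wordAct_sup] at hβ
    have hDeq : (D ⊓ wordAct S.θ β A) ⊔ (D ⊓ wordAct S.θ β C₂) = D := by
      rw [← inf_sup_left, inf_eq_left.mpr hβ]
    have hsup : (D ⊓ wordAct S.θ β A) ⊔ (D ⊓ wordAct S.θ β C₂) ∈ T := by rwa [hDeq]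
    rcases h2 _ _ hsup with hE | hE
    · left
      have hwA : wordAct S.θ β A ∈ T := h3 _ hE _ inf_le_right
      exact ⟨word_mem S h1 β hwA, _, hE, α, β,
        le_trans inf_le_left hα, inf_le_right⟩
    · right
      have hwA : wordAct S.θ β C₂ ∈ T := h3 _ hE _ inf_le_right
      exact ⟨word_mem S h1 β hwA, _, hE, α, β,
        le_trans inf_le_left hα, inf_le_right⟩
  · rintro A ⟨hmem, D, hD, α, β, hα, hβ⟩ C₂ hle
    exact ⟨h3 A hmem C₂ hle, D, hD, α, β, hα, le_trans hβ (wordAct_mono S β hle)⟩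
  · rintro A ⟨hmem, D, hD, α, β, hα, hβ⟩ hreg
    match β with
    | b :: β' =>
      refine ⟨b, ?_, D, hD, α, β', hα, hβ⟩
      have hw : wordAct S.θ β' (S.θ b A) ∈ T := h3 _ hD _ hβ
      exact word_mem S h1 β' hw
    | [] =>
      have hDA : D ≤ A := hβ
      have hDreg : RegularElt S D := fun C'' hle hne => hreg C'' (hle.trans hDA) hne
      obtain ⟨a, ha⟩ := h4 D hD hDreg
      refine ⟨a, h3 _ ha _ (theta_mono S a hDA), S.θ a D, ha, α ++ [a], [], ?_,
        theta_mono S a hDA⟩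
      rw [wordAct_append]
      exact theta_mono S a hα

lemma sInter_preTail {A : B} (c : Set (Set B)) (hc : IsChain (· ⊆ ·) c)
    (hne : c.Nonempty) (hall : ∀ T ∈ c, PreTail S T ∧ A ∈ T) :
    PreTail S (⋂₀ c) ∧ A ∈ ⋂₀ c := by
  obtain ⟨T₀, hT₀⟩ := hne
  have hmemA : A ∈ ⋂₀ c := fun T hT => (hall T hT).2
  refine ⟨⟨?_, ?_, ?_, ?_, ?_⟩, hmemA⟩
  · intro h
    exact (hall T₀ hT₀).1.1 (h T₀ hT₀)
  · intro A' a h T hT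
    exact (hall T hT).1.2.1 A' a (h T hT)
  · intro A₁ A₂ h
    by_contra hcon
    push_neg at hcon
    obtain ⟨hn1, hn2⟩ := hcon
    rw [Set.mem_sInter] at hn1 hn2
    push_neg at hn1 hn2
    obtain ⟨T₁, hT₁c, hT₁⟩ := hn1
    obtain ⟨T₂, hT₂c, hT₂⟩ := hn2
    rcases hc.total hT₁c hT₂c with hle | hle
    · rcases (hall T₁ hT₁c).1.2.2.1 A₁ A₂ (h T₁ hT₁c) with h' | h'
      · exact hT₁ h'
      · exact hT₂ (hle h')
    · rcases (hall T₂ hT₂c).1.2.2.1 A₁ A₂ (h T₂ hT₂c) with h' | h'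
      · exact hT₁ (hle h')
      · exact hT₂ h'
  · intro A' h C hle T hT
    exact (hall T hT).1.2.2.2.1 A' (h T hT) C hle
  · intro C hC hreg
    have hCne : C ≠ ⊥ := by
      intro h
      exact (hall T₀ hT₀).1.1 (h ▸ hC T₀ hT₀)
    obtain ⟨hΔfin, -⟩ := hreg C le_rfl hCne
    set g : Set B → Set L := fun T => {a : L | S.θ a C ∈ T} with hg
    have hgsub : ∀ T ∈ c, g T ⊆ DeltaSet S C := by
      intro T hT a ha
      intro hbot
      exact (hall T hT).1.1 (hbot ▸ ha)
    have hgfin : ∀ T ∈ c, (g T).Finite := fun T hT => hΔfin.subset (hgsub T hT)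
    have hgne : ∀ T ∈ c, (g T).Nonempty := by
      intro T hT
      obtain ⟨a, ha⟩ := (hall T hT).1.2.2.2.2 C (hC T hT) hreg
      exact ⟨a, ha⟩
    have hgmono : ∀ T₁ ∈ c, ∀ T₂ ∈ c, T₁ ⊆ T₂ → g T₁ ⊆ g T₂ :=
      fun T₁ _ T₂ _ h a ha => h ha
    set N : Set ℕ := {n : ℕ | ∃ T ∈ c, (g T).ncard = n} with hN
    have hNne : N.Nonempty := ⟨(g T₀).ncard, T₀, hT₀, rfl⟩
    obtain ⟨T₁, hT₁c, hT₁card⟩ := Nat.sInf_mem hNne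
    have hmin : ∀ T ∈ c, g T₁ ⊆ g T := by
      intro T hT
      rcases hc.total hT₁c hT with hle | hle
      · exact hgmono T₁ hT₁c T hT hle
      · have hsub : g T ⊆ g T₁ := hgmono T hT T₁ hT₁c hle
        have hcard : (g T₁).ncard ≤ (g T).ncard := by
          rw [hT₁card]
          exact Nat.sInf_le ⟨T, hT, rfl⟩
        exact (Set.eq_of_subset_of_ncard_le hsub hcard (hgfin T₁ hT₁c)).symm.subset
    obtain ⟨a, ha⟩ := hgne T₁ hT₁c
    exact ⟨a, fun T hT => hmin T hT ha⟩

lemma exists_maximalTail_subset {T : Set B} (hT : PreTail S T) {A : B} (hA : A ∈ T) :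
    ∃ m : Set B, IsMaximalTail S m ∧ m ⊆ T ∧ A ∈ m := by
  set 𝒮 : Set (Set B) := {T' : Set B | T' ⊆ T ∧ PreTail S T' ∧ A ∈ T'} with h𝒮
  have hzorn : ∀ c ⊆ 𝒮, IsChain (· ⊆ ·) c → c.Nonempty → ∃ lb ∈ 𝒮, ∀ s ∈ c, lb ⊆ s := by
    intro c hc hchain hcne
    obtain ⟨hpre, hmemA⟩ := sInter_preTail S c hchain hcne
      (fun T' hT' => ⟨(hc hT').2.1, (hc hT').2.2⟩)
    obtain ⟨T₀, hT₀⟩ := hcne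
    exact ⟨⋂₀ c, ⟨fun x hx => (hc hT₀).1 (hx T₀ hT₀), hpre, hmemA⟩,
      fun s hs x hx => hx s hs⟩
  obtain ⟨m, hmT, hmin⟩ := zorn_superset_nonempty 𝒮 hzorn T ⟨le_refl T, hT, hA⟩
  obtain ⟨hmsub, hmpre, hmA⟩ := hmin.prop
  have hminimal : ∀ T' ∈ 𝒮, T' ⊆ m → T' = m := by
    intro T' hT' hsub
    exact subset_antisymm hsub (hmin.2 hT' hsub)
  have hTA : TCset S m A = m := by
    refine hminimal _ ⟨(TCset_subset S m A).trans hmsub,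
      TCset_preTail S hmpre hmA, TCset_self S hmA⟩ (TCset_subset S m A)
  refine ⟨m, ⟨⟨A, hmA⟩, hmpre.1, hmpre.2.1, hmpre.2.2.1, hmpre.2.2.2.1,
    hmpre.2.2.2.2, ?_⟩, hmsub, hmA⟩
  intro A₁ hA₁ A₂ hA₂
  have h1 : A₁ ∈ TCset S m A := hTA.symm ▸ hA₁
  have hA_in : A ∈ TCset S m A₁ := TCset_symm S h1 hmA
  have hTA₁ : TCset S m A₁ = m := by
    refine hminimal _ ⟨(TCset_subset S m A₁).trans hmsub,
      TCset_preTail S hmpre hA₁, hA_in⟩ (TCset_subset S m A₁)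
  have h2 : A₂ ∈ TCset S m A₁ := hTA₁.symm ▸ hA₂
  obtain ⟨-, D, hD, α, β, hα, hβ⟩ := h2
  exact ⟨D, hD, ⟨α, hα⟩, ⟨β, hβ⟩⟩

lemma basis_lemma :
    IsTopologicalBasis {s : Set (TailSpace S) | ∃ A : B, s = USet S A} := by
  refine ⟨?_, ?_, rfl⟩
  · rintro t₁ ⟨A₁, rfl⟩ t₂ ⟨A₂, rfl⟩ T ⟨h1, h2⟩
    obtain ⟨C, hC, ⟨α, hα⟩, ⟨β, hβ⟩⟩ :=
      T.2.2.2.2.2.2.2 A₁ h1 A₂ h2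
    refine ⟨USet S C, ⟨C, rfl⟩, hC, fun T' hT' => ⟨?_, ?_⟩⟩
    · have hw : wordAct S.θ α A₁ ∈ T'.1 :=
        T'.2.2.2.2.2.1 C hT' _ hα
      exact word_mem S T'.2.2.2.1 α hw
    · have hw : wordAct S.θ β A₂ ∈ T'.1 :=
        T'.2.2.2.2.2.1 C hT' _ hβ
      exact word_mem S T'.2.2.2.1 β hw
  · apply Set.eq_univ_of_forall
    intro T
    obtain ⟨A, hA⟩ := T.2.1
    exact ⟨USet S A, ⟨A, rfl⟩, hA⟩

lemma USet_bot_empty : USet S ⊥ = ∅ := by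
  ext T
  simp only [USet, Set.mem_setOf_eq, Set.mem_empty_iff_false, iff_false]
  exact T.2.2.1

lemma isCompact_USet (A : B) : IsCompact (USet S A) := by
  rw [isCompact_iff_ultrafilter_le_nhds]
  intro F hF
  rw [Filter.le_principal_iff] at hF
  set Tinf : Set B := {C : B | USet S C ∈ F} with hTinf
  have hATinf : A ∈ Tinf := hF
  have hpre : PreTail S Tinf := by
    refine ⟨?_, ?_, ?_, ?_, ?_⟩
    · intro h
      rw [Set.mem_setOf_eq, USet_bot_empty] at h
      exact Ultrafilter.empty_notMem h
    · intro A' a h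
      refine Filter.mem_of_superset h ?_
      intro T hT
      exact T.2.2.2.1 A' a hT
    · intro A₁ A₂ h
      have hsub : USet S (A₁ ⊔ A₂) ⊆ USet S A₁ ∪ USet S A₂ := by
        intro T hT
        rcases T.2.2.2.2.1 A₁ A₂ hT with h' | h'
        · exact Or.inl h'
        · exact Or.inr h'
      have : USet S A₁ ∪ USet S A₂ ∈ F := Filter.mem_of_superset h hsub
      exact (Ultrafilter.union_mem_iff.mp this)
    · intro A' h C hle
      refine Filter.mem_of_superset h ?_
      intro T hT
      exact T.2.2.2.2.2.1 A' hT C hle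
    · intro A' h hreg
      have hne : A' ≠ ⊥ := by
        intro hbot
        rw [Set.mem_setOf_eq, hbot, USet_bot_empty] at h
        exact Ultrafilter.empty_notMem h
      obtain ⟨hΔfin, -⟩ := hreg A' le_rfl hne
      have hsub : USet S A' ⊆ ⋃ a ∈ DeltaSet S A', USet S (S.θ a A') := by
        intro T hT
        obtain ⟨a, ha⟩ := T.2.2.2.2.2.2.1 A' hT hreg
        have haΔ : a ∈ DeltaSet S A' := by
          intro hbot
          exact T.2.2.1 (hbot ▸ ha)
        exact Set.mem_biUnion haΔ ha
      have hmem : (⋃ a ∈ DeltaSet S A', USet S (S.θ a A')) ∈ F :=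
        Filter.mem_of_superset h hsub
      obtain ⟨a, -, ha⟩ := (Ultrafilter.finite_biUnion_mem_iff hΔfin).mp hmem
      exact ⟨a, ha⟩
  obtain ⟨m, hm, hmsub, hmA⟩ := exists_maximalTail_subset S hpre hATinf
  refine ⟨⟨m, hm⟩, hmA, ?_⟩
  intro s hs
  replace hs := (basis_lemma S).mem_nhds_iff.mp hs
  obtain ⟨t, ⟨C, rfl⟩, hCt, hts⟩ := hs
  exact Filter.mem_of_superset (hmsub hCt) hts

lemma closure_eq (Srm : Set (TailSpace S)) :
    closure Srm = {T : TailSpace S | T.1 ⊆ ⋃ T' ∈ Srm, T'.1} := by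
  ext T
  constructor
  · intro hmem C hC
    have hopen : IsOpen (USet S C) := (basis_lemma S).isOpen ⟨C, rfl⟩
    obtain ⟨T', hT'U, hT'S⟩ := mem_closure_iff.mp hmem (USet S C) hopen hC
    exact Set.mem_biUnion hT'S hT'U
  · intro h
    rw [mem_closure_iff]
    intro o ho hTo
    obtain ⟨t, ⟨C, rfl⟩, hCt, hto⟩ := ((basis_lemma S).isOpen_iff.mp ho) T hTo
    obtain ⟨T', hT'S, hCT'⟩ := Set.mem_iUnion₂.mp (h hCt)
    exact ⟨T', hto hCT', hT'S⟩

end TailSpaceProof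

/-- `{U_A : A ∈ B}` is a basis of compact open sets for a topology on the set `M`
of maximal tails, and the closure of any `S' ⊆ M` is `{T ∈ M : T ⊆ ∪_{S'' ∈ S'} S''}`. -/
theorem tail_space_topology {B L : Type*} [GeneralizedBooleanAlgebra B]
    (S : BoolDynSys B L) :
    TopologicalSpace.IsTopologicalBasis
      {s : Set (TailSpace S) | ∃ A : B, s = USet S A} ∧
    (∀ A : B, IsCompact (USet S A) ∧ IsOpen (USet S A)) ∧
    (∀ Srm : Set (TailSpace S),
      closure Srm = {T : TailSpace S | T.1 ⊆ ⋃ T' ∈ Srm, T'.1}) := by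
  refine ⟨TailSpaceProof.basis_lemma S, fun A => ⟨TailSpaceProof.isCompact_USet S A,
    (TailSpaceProof.basis_lemma S).isOpen ⟨A, rfl⟩⟩, TailSpaceProof.closure_eq S⟩
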